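/- Let S be a nearly Gorenstein numerical semigroup with minimal generators n_1 < ... < n_ν and NG-vector (f_1, ..., f_ν). If i is the minimum index with f_i ≠ F(S), then f_i = F(S) - n_i + n_l for some index l < i. -/
import Mathlib


/-- A numerical semigroup: a subset of ℕ containing 0, closed under addition,
with finite complement. -/
def IsNumSgp (S : Set ℕ) : Prop :=
  0 ∈ S ∧ (∀ a ∈ S, ∀ b ∈ S, a + b ∈ S) ∧ (Sᶜ : Set ℕ).Finite

/-- An integer belongs to (the image in ℤ of) S. -/
def memZ (S : Set ℕ) (z : ℤ) : Prop := ∃ s ∈ S, (s : ℤ) = z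

/-- F is the Frobenius number of S: the largest natural number not in S. -/
def IsFrob (S : Set ℕ) (F : ℕ) : Prop := F ∉ S ∧ ∀ n, F < n → n ∈ S

/-- The set of pseudo-Frobenius numbers of S. -/
def PF (S : Set ℕ) : Set ℕ := {f | f ∉ S ∧ ∀ s ∈ S, s ≠ 0 → f + s ∈ S}

/-- n is a minimal generator of S. -/
def IsMinGen (S : Set ℕ) (n : ℕ) : Prop :=
  n ∈ S ∧ n ≠ 0 ∧ ¬∃ a ∈ S, ∃ b ∈ S, a ≠ 0 ∧ b ≠ 0 ∧ a + b = n

/-- S is almost symmetric (Nari): F - f ∈ PF(S) for every f ∈ PF(S). -/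
def AlmostSym (S : Set ℕ) (F : ℕ) : Prop :=
  ∀ f ∈ PF S, ∃ g ∈ PF S, (g : ℤ) = (F : ℤ) - (f : ℤ)

/-- S is symmetric: PF(S) = {F(S)} (vacuously true when S = ℕ). -/
def IsSym (S : Set ℕ) : Prop := ∀ F, IsFrob S F → PF S = {F}

/-- (f_1,...,f_ν) is an NG-vector for S with minimal generators n_1,...,n_ν. -/
def IsNGVector {ν : ℕ} (S : Set ℕ) (n f : Fin ν → ℕ) : Prop :=
  ∀ i, f i ∈ PF S ∧ ∀ g ∈ PF S, memZ S ((n i : ℤ) + (f i : ℤ) - (g : ℤ))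

/-- S is nearly Gorenstein (generator criterion): for each minimal generator m
there is f ∈ PF(S) with m + f - g ∈ S for all g ∈ PF(S). -/
def NearlyGGen (S : Set ℕ) : Prop :=
  ∀ m, IsMinGen S m → ∃ f ∈ PF S, ∀ g ∈ PF S, memZ S ((m : ℤ) + (f : ℤ) - (g : ℤ))

/-- The canonical ideal K(S) = {z ∈ ℤ : F - z ∉ S}. -/
def Kan (S : Set ℕ) (F : ℕ) : Set ℤ := {z | ¬ memZ S ((F : ℤ) - z)}

/-- The relative ideal (S - K(S)) = {z ∈ ℤ : z + K(S) ⊆ S}. -/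
def SmK (S : Set ℕ) (F : ℕ) : Set ℤ := {z | ∀ k ∈ Kan S F, memZ S (z + k)}

/-- S is nearly Gorenstein: M(S) ⊆ K(S) + (S - K(S)). -/
def NearlyG (S : Set ℕ) (F : ℕ) : Prop :=
  ∀ m ∈ S, m ≠ 0 → ∃ k ∈ Kan S F, ∃ x ∈ SmK S F, k + x = (m : ℤ)

/-- Every nonzero element of a numerical semigroup is a minimal generator
plus an element of the semigroup. -/
lemma gen_decomp (S : Set ℕ) (hS : IsNumSgp S) :
    ∀ s, s ∈ S → s ≠ 0 → ∃ m t, IsMinGen S m ∧ t ∈ S ∧ m + t = s := by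
  intro s
  induction s using Nat.strong_induction_on with
  | _ s ih =>
    intro hs hs0
    by_cases h : ∃ a ∈ S, ∃ b ∈ S, a ≠ 0 ∧ b ≠ 0 ∧ a + b = s
    · obtain ⟨a, ha, b, hb, ha0, hb0, hab⟩ := h
      obtain ⟨m, t, hm, ht, hmt⟩ := ih a (by omega) ha ha0
      exact ⟨m, t + b, hm, hS.2.1 t ht b hb, by omega⟩
    · exact ⟨s, 0, ⟨hs, hs0, h⟩, hS.1, by omega⟩

theorem stmt4 (ν : ℕ) (S : Set ℕ) (F : ℕ) (n f : Fin ν → ℕ)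
    (hS : IsNumSgp S) (hF : IsFrob S F) (hmono : StrictMono n)
    (hgen : ∀ m, IsMinGen S m ↔ ∃ i, n i = m)
    (hNG : IsNGVector S n f)
    (i : Fin ν) (hi : f i ≠ F) (hmin : ∀ j, j < i → f j = F) :
    ∃ l, l < i ∧ (f i : ℤ) = (F : ℤ) - (n i : ℤ) + (n l : ℤ) := by
  have hFPF : F ∈ PF S := ⟨hF.1, fun s hs hs0 => hF.2 _ (by omega)⟩
  obtain ⟨hfi, hNGi⟩ := hNG i
  obtain ⟨u, hu, huval⟩ := hNGi F hFPF
  have hniMG : IsMinGen S (n i) := (hgen (n i)).2 ⟨i, rfl⟩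
  have hfiF : f i < F := by
    have h1 : f i ∉ S := hfi.1
    have h2 : f i ≤ F := by
      by_contra h
      exact h1 (hF.2 _ (by omega))
    omega
  have hu0 : u ≠ 0 := by
    intro h
    subst h
    have hmem : f i + n i ∈ S := hfi.2 (n i) hniMG.1 hniMG.2.1
    have hFeq : F = f i + n i := by omega
    exact hF.1 (hFeq ▸ hmem)
  have huni : u < n i := by omega
  obtain ⟨m, t, hmMG, ht, hmt⟩ := gen_decomp S hS u hu hu0
  obtain ⟨l, hl⟩ := (hgen m).1 hmMG
  have hmni : m < n i := by omega
  have hli : l < i := by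
    by_contra h
    have hle : n i ≤ n l := hmono.le_iff_le.2 (le_of_not_gt h)
    omega
  by_cases ht0 : t = 0
  · exact ⟨l, hli, by omega⟩
  · exfalso
    have hfl : f l = F := hmin l hli
    obtain ⟨v, hv, hvval⟩ := (hNG l).2 (f i) hfi
    rw [hfl] at hvval
    -- (v:ℤ) = n l + F - f i = n i - t
    have hv0 : v ≠ 0 := by omega
    exact hniMG.2.2 ⟨v, hv, t, ht, hv0, ht0, by omega⟩
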